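/- Let $b, d \in C(\overline{B_R})$ with positive lower and upper bounds, and define $\lambda^* = \inf\{\int_{B_R}[D|\nabla\varphi|^2 + (d - b)\varphi^2] : \varphi \in H_0^1(B_R), \int_{B_R}\varphi^2 = 1\}$ and $R_0^{Di} = \sup_{\phi \in H_0^1(B_R), \phi \neq 0} \frac{\int_{B_R} b\,\phi^2}{\int_{B_R}(D|\nabla\phi|^2 + d\,\phi^2)}$. Then $1 - R_0^{Di}$ has the same sign as $\lambda^*$: $\lambda^* > 0 \iff R_0^{Di} < 1$, $\lambda^* = 0 \iff R_0^{Di} = 1$, and $\lambda^* < 0 \iff R_0^{Di} > 1$. -/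

import Mathlib

open MeasureTheory

/-- The threshold value `R_0^{Di}(D, B_R)`, defined as the supremum of the Rayleigh-type
quotients over nonzero test functions in `H_0^1(B_R)` (modeled by `C^1` functions with
support in the ball). -/
noncomputable def R0Di (n : ℕ) (D R : ℝ) (b d : EuclideanSpace ℝ (Fin n) → ℝ) : ℝ :=
  sSup { q : ℝ | ∃ φ : EuclideanSpace ℝ (Fin n) → ℝ,
      ContDiff ℝ 1 φ ∧ tsupport φ ⊆ Metric.ball (0 : EuclideanSpace ℝ (Fin n)) R ∧
      φ ≠ 0 ∧
      q = (∫ x in Metric.ball (0 : EuclideanSpace ℝ (Fin n)) R, b x * (φ x) ^ 2) /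
          (∫ x in Metric.ball (0 : EuclideanSpace ℝ (Fin n)) R,
            (D * ‖fderiv ℝ φ x‖ ^ 2 + d x * (φ x) ^ 2)) }

/-- The variational principal eigenvalue `λ*` of `-DΔ + (d - b)` on `B_R` with
Dirichlet boundary conditions. -/
noncomputable def lamStar (n : ℕ) (D R : ℝ) (b d : EuclideanSpace ℝ (Fin n) → ℝ) : ℝ :=
  sInf { q : ℝ | ∃ φ : EuclideanSpace ℝ (Fin n) → ℝ,
      ContDiff ℝ 1 φ ∧ tsupport φ ⊆ Metric.ball (0 : EuclideanSpace ℝ (Fin n)) R ∧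
      (∫ x in Metric.ball (0 : EuclideanSpace ℝ (Fin n)) R, (φ x) ^ 2) = 1 ∧
      q = ∫ x in Metric.ball (0 : EuclideanSpace ℝ (Fin n)) R,
            (D * ‖fderiv ℝ φ x‖ ^ 2 + (d x - b x) * (φ x) ^ 2) }

section auxSign

variable {n : ℕ}

local notation "Ec" => EuclideanSpace ℝ (Fin n)

private lemma aux_hcs {R : ℝ} {φ : Ec → ℝ} (hsupp : tsupport φ ⊆ Metric.ball (0 : Ec) R) :
    HasCompactSupport φ :=
  (isCompact_closedBall (0 : Ec) R).of_isClosed_subset (isClosed_tsupport φ)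
    (hsupp.trans Metric.ball_subset_closedBall)

private lemma int_sq {R : ℝ} {φ : Ec → ℝ} (hφ : ContDiff ℝ 1 φ)
    (hsupp : tsupport φ ⊆ Metric.ball (0 : Ec) R) :
    Integrable (fun x => φ x ^ 2) (volume.restrict (Metric.ball (0 : Ec) R)) := by
  have h1 : Continuous fun x => φ x ^ 2 := hφ.continuous.pow 2
  have h2 : HasCompactSupport fun x => φ x ^ 2 := by
    have := (aux_hcs hsupp).comp_left (g := fun y : ℝ => y ^ 2) (by simp)
    exact this
  exact (h1.integrable_of_hasCompactSupport h2).restrict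

private lemma int_grad {R D : ℝ} {φ : Ec → ℝ} (hφ : ContDiff ℝ 1 φ)
    (hsupp : tsupport φ ⊆ Metric.ball (0 : Ec) R) :
    Integrable (fun x => D * ‖fderiv ℝ φ x‖ ^ 2)
      (volume.restrict (Metric.ball (0 : Ec) R)) := by
  have h1 : Continuous fun x => D * ‖fderiv ℝ φ x‖ ^ 2 :=
    continuous_const.mul (((hφ.continuous_fderiv one_ne_zero).norm).pow 2)
  have h2 : HasCompactSupport fun x => D * ‖fderiv ℝ φ x‖ ^ 2 := by
    have := ((aux_hcs hsupp).fderiv ℝ).comp_left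
      (g := fun L : Ec →L[ℝ] ℝ => D * ‖L‖ ^ 2) (by simp)
    exact this
  exact (h1.integrable_of_hasCompactSupport h2).restrict

private lemma int_coeff {R C : ℝ} {f φ : Ec → ℝ} (hφ : ContDiff ℝ 1 φ)
    (hsupp : tsupport φ ⊆ Metric.ball (0 : Ec) R)
    (hfc : ContinuousOn f (Metric.closedBall (0 : Ec) R)) (hC : ∀ x, |f x| ≤ C) :
    Integrable (fun x => f x * φ x ^ 2) (volume.restrict (Metric.ball (0 : Ec) R)) := by
  have hmeas : AEStronglyMeasurable (fun x => f x * φ x ^ 2)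
      (volume.restrict (Metric.ball (0 : Ec) R)) := by
    have h1 : AEMeasurable f (volume.restrict (Metric.ball (0 : Ec) R)) :=
      (hfc.mono Metric.ball_subset_closedBall).aemeasurable Metric.isOpen_ball.measurableSet
    exact (h1.mul (hφ.continuous.pow 2).measurable.aemeasurable).aestronglyMeasurable
  refine ((int_sq hφ hsupp).const_mul C).mono' hmeas ?_
  filter_upwards with x
  have h0 : (0:ℝ) ≤ φ x ^ 2 := sq_nonneg _
  have := hC x
  rw [Real.norm_eq_abs, abs_mul, abs_of_nonneg h0]
  nlinarith [abs_nonneg (f x)]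

private lemma sq_pos_of_ne {R : ℝ} {φ : Ec → ℝ} (hφ : ContDiff ℝ 1 φ)
    (hsupp : tsupport φ ⊆ Metric.ball (0 : Ec) R) (hne : φ ≠ 0) :
    0 < ∫ x in Metric.ball (0 : Ec) R, φ x ^ 2 := by
  rw [setIntegral_pos_iff_support_of_nonneg_ae
    (Filter.Eventually.of_forall fun x => sq_nonneg _) (int_sq hφ hsupp)]
  obtain ⟨x0, hx0⟩ : ∃ x, φ x ≠ 0 := by
    by_contra h
    push_neg at h
    exact hne (funext h)
  have hsup : Function.support (fun x => φ x ^ 2) = Function.support φ := by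
    ext x; simp [Function.mem_support, pow_eq_zero_iff]
  have hopen : IsOpen (Function.support φ) := by
    have : Function.support φ = φ ⁻¹' ({0}ᶜ) := by ext x; simp [Function.mem_support]
    rw [this]
    exact (isOpen_compl_singleton).preimage hφ.continuous
  have hx0b : x0 ∈ Metric.ball (0 : Ec) R := hsupp (subset_tsupport φ hx0)
  rw [hsup]
  exact IsOpen.measure_pos volume (hopen.inter Metric.isOpen_ball) ⟨x0, hx0, hx0b⟩

private lemma normalize_mem {R D : ℝ} {b d φ : Ec → ℝ} (hφ : ContDiff ℝ 1 φ)
    (hsupp : tsupport φ ⊆ Metric.ball (0 : Ec) R)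
    (hS : 0 < ∫ x in Metric.ball (0 : Ec) R, φ x ^ 2) :
    ∃ ψ : Ec → ℝ, ContDiff ℝ 1 ψ ∧ tsupport ψ ⊆ Metric.ball (0 : Ec) R ∧
      (∫ x in Metric.ball (0 : Ec) R, ψ x ^ 2) = 1 ∧
      (∫ x in Metric.ball (0 : Ec) R, (D * ‖fderiv ℝ ψ x‖ ^ 2 + (d x - b x) * ψ x ^ 2)) =
        (∫ x in Metric.ball (0 : Ec) R, (D * ‖fderiv ℝ φ x‖ ^ 2 + (d x - b x) * φ x ^ 2)) /
          (∫ x in Metric.ball (0 : Ec) R, φ x ^ 2) := by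
  set S := ∫ x in Metric.ball (0 : Ec) R, φ x ^ 2 with hSdef
  set c : ℝ := (Real.sqrt S)⁻¹ with hc
  have hcpos : 0 < c := inv_pos.2 (Real.sqrt_pos.2 hS)
  have hc2 : c ^ 2 * S = 1 := by
    rw [hc, inv_pow, Real.sq_sqrt hS.le]
    exact inv_mul_cancel₀ hS.ne'
  refine ⟨fun x => c * φ x, contDiff_const.mul hφ, ?_, ?_, ?_⟩
  · refine subset_trans ?_ hsupp
    apply closure_mono
    intro x hx
    simp only [Function.mem_support] at hx ⊢
    intro h
    exact hx (by rw [h, mul_zero])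
  · have h := integral_smul (μ := volume.restrict (Metric.ball (0 : Ec) R))
      (c ^ 2) (fun x => φ x ^ 2)
    simp only [smul_eq_mul] at h
    have : (∫ x in Metric.ball (0 : Ec) R, (c * φ x) ^ 2)
        = c ^ 2 * S := by
      rw [hSdef, ← h]
      congr 1 with x
      ring
    rw [this, hc2]
  · have hpt : ∀ x, D * ‖fderiv ℝ (fun y => c * φ y) x‖ ^ 2 + (d x - b x) * (c * φ x) ^ 2
        = c ^ 2 * (D * ‖fderiv ℝ φ x‖ ^ 2 + (d x - b x) * φ x ^ 2) := by
      intro x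
      rw [fderiv_const_mul (hφ.differentiable one_ne_zero x) c, norm_smul]
      simp only [Real.norm_eq_abs, mul_pow, sq_abs]
      ring
    simp only [hpt]
    have h := integral_smul (μ := volume.restrict (Metric.ball (0 : Ec) R))
      (c ^ 2) (fun x => D * ‖fderiv ℝ φ x‖ ^ 2 + (d x - b x) * φ x ^ 2)
    simp only [smul_eq_mul] at h
    rw [h, eq_div_iff hS.ne']
    set Q := ∫ x in Metric.ball (0 : Ec) R,
      (D * ‖fderiv ℝ φ x‖ ^ 2 + (d x - b x) * φ x ^ 2)
    linear_combination Q * hc2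

/-- The three basic integral facts: `Q = E - N`, `b1 * S ≤ E`, `N ≤ b2 * S`. -/
private lemma key_facts {R D b1 b2 : ℝ} {b d φ : Ec → ℝ}
    (hD : 0 < D) (hb1 : 0 < b1)
    (hbc : ContinuousOn b (Metric.closedBall (0 : Ec) R))
    (hdc : ContinuousOn d (Metric.closedBall (0 : Ec) R))
    (hb : ∀ x, b1 ≤ b x ∧ b x ≤ b2) (hd : ∀ x, b1 ≤ d x ∧ d x ≤ b2)
    (hφ : ContDiff ℝ 1 φ) (hsupp : tsupport φ ⊆ Metric.ball (0 : Ec) R) :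
    (∫ x in Metric.ball (0 : Ec) R, (D * ‖fderiv ℝ φ x‖ ^ 2 + (d x - b x) * φ x ^ 2))
      = (∫ x in Metric.ball (0 : Ec) R, (D * ‖fderiv ℝ φ x‖ ^ 2 + d x * φ x ^ 2))
        - (∫ x in Metric.ball (0 : Ec) R, b x * φ x ^ 2) ∧
    b1 * (∫ x in Metric.ball (0 : Ec) R, φ x ^ 2)
      ≤ (∫ x in Metric.ball (0 : Ec) R, (D * ‖fderiv ℝ φ x‖ ^ 2 + d x * φ x ^ 2)) ∧
    (∫ x in Metric.ball (0 : Ec) R, b x * φ x ^ 2)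
      ≤ b2 * (∫ x in Metric.ball (0 : Ec) R, φ x ^ 2) := by
  have hb2 : 0 < b2 := lt_of_lt_of_le hb1 ((hb 0).1.trans (hb 0).2)
  have habs_b : ∀ x, |b x| ≤ b2 := fun x => abs_le.2 ⟨by linarith [(hb x).1], (hb x).2⟩
  have habs_d : ∀ x, |d x| ≤ b2 := fun x => abs_le.2 ⟨by linarith [(hd x).1], (hd x).2⟩
  have hIS := int_sq hφ hsupp
  have hIG := int_grad (D := D) hφ hsupp
  have hIN := int_coeff hφ hsupp hbc habs_b
  have hID := int_coeff hφ hsupp hdc habs_d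
  have hIE : Integrable (fun x => D * ‖fderiv ℝ φ x‖ ^ 2 + d x * φ x ^ 2)
      (volume.restrict (Metric.ball (0 : Ec) R)) := hIG.add hID
  refine ⟨?_, ?_, ?_⟩
  · have heq : (fun x => D * ‖fderiv ℝ φ x‖ ^ 2 + (d x - b x) * φ x ^ 2)
        = fun x => (D * ‖fderiv ℝ φ x‖ ^ 2 + d x * φ x ^ 2) - b x * φ x ^ 2 := by
      funext x; ring
    rw [show (∫ x in Metric.ball (0 : Ec) R, (D * ‖fderiv ℝ φ x‖ ^ 2 + (d x - b x) * φ x ^ 2))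
      = ∫ x in Metric.ball (0 : Ec) R,
         ((D * ‖fderiv ℝ φ x‖ ^ 2 + d x * φ x ^ 2) - b x * φ x ^ 2) from by rw [heq]]
    exact integral_sub hIE hIN
  · have h := integral_smul (μ := volume.restrict (Metric.ball (0 : Ec) R))
      b1 (fun x => φ x ^ 2)
    simp only [smul_eq_mul] at h
    rw [← h]
    refine integral_mono (hIS.const_mul b1) hIE fun x => ?_
    have h1 : b1 * φ x ^ 2 ≤ d x * φ x ^ 2 :=
      mul_le_mul_of_nonneg_right (hd x).1 (sq_nonneg _)
    have h2 : 0 ≤ D * ‖fderiv ℝ φ x‖ ^ 2 := mul_nonneg hD.le (sq_nonneg _)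
    simpa using by linarith
  · have h := integral_smul (μ := volume.restrict (Metric.ball (0 : Ec) R))
      b2 (fun x => φ x ^ 2)
    simp only [smul_eq_mul] at h
    rw [← h]
    refine integral_mono hIN (hIS.const_mul b2) fun x => ?_
    simpa using mul_le_mul_of_nonneg_right (hb x).2 (sq_nonneg _)

end auxSign

/-- `1 - R_0^{Di}(D, B_R)` has the same sign as `λ*(D, B_R)`. -/
theorem sign_lamStar_iff_R0Di (n : ℕ) (D R b1 b2 : ℝ)
    (b d : EuclideanSpace ℝ (Fin n) → ℝ)
    (hD : 0 < D) (hR : 0 < R) (hb1 : 0 < b1)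
    (hbc : ContinuousOn b (Metric.closedBall (0 : EuclideanSpace ℝ (Fin n)) R))
    (hdc : ContinuousOn d (Metric.closedBall (0 : EuclideanSpace ℝ (Fin n)) R))
    (hb : ∀ x, b1 ≤ b x ∧ b x ≤ b2) (hd : ∀ x, b1 ≤ d x ∧ d x ≤ b2) :
    (0 < lamStar n D R b d ↔ R0Di n D R b d < 1) ∧
    (lamStar n D R b d = 0 ↔ R0Di n D R b d = 1) ∧
    (lamStar n D R b d < 0 ↔ 1 < R0Di n D R b d) := by
  classical
  have hb2 : 0 < b2 := lt_of_lt_of_le hb1 ((hb 0).1.trans (hb 0).2)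
  set SR : Set ℝ := { q : ℝ | ∃ φ : EuclideanSpace ℝ (Fin n) → ℝ,
      ContDiff ℝ 1 φ ∧ tsupport φ ⊆ Metric.ball (0 : EuclideanSpace ℝ (Fin n)) R ∧
      φ ≠ 0 ∧
      q = (∫ x in Metric.ball (0 : EuclideanSpace ℝ (Fin n)) R, b x * (φ x) ^ 2) /
          (∫ x in Metric.ball (0 : EuclideanSpace ℝ (Fin n)) R,
            (D * ‖fderiv ℝ φ x‖ ^ 2 + d x * (φ x) ^ 2)) } with hSRdef
  set SL : Set ℝ := { q : ℝ | ∃ φ : EuclideanSpace ℝ (Fin n) → ℝ,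
      ContDiff ℝ 1 φ ∧ tsupport φ ⊆ Metric.ball (0 : EuclideanSpace ℝ (Fin n)) R ∧
      (∫ x in Metric.ball (0 : EuclideanSpace ℝ (Fin n)) R, (φ x) ^ 2) = 1 ∧
      q = ∫ x in Metric.ball (0 : EuclideanSpace ℝ (Fin n)) R,
            (D * ‖fderiv ℝ φ x‖ ^ 2 + (d x - b x) * (φ x) ^ 2) } with hSLdef
  have hrdef : R0Di n D R b d = sSup SR := rfl
  have hldef : lamStar n D R b d = sInf SL := rfl
  set r := R0Di n D R b d with hr
  set l := lamStar n D R b d with hl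
  -- a bump function
  obtain ⟨φ0, hφ0, hsupp0, hne0⟩ : ∃ φ0 : EuclideanSpace ℝ (Fin n) → ℝ,
      ContDiff ℝ 1 φ0 ∧
      tsupport φ0 ⊆ Metric.ball (0 : EuclideanSpace ℝ (Fin n)) R ∧ φ0 ≠ 0 := by
    have hR4 : (0:ℝ) < R / 4 := by linarith
    have hR2 : R / 4 < R / 2 := by linarith
    let c : ContDiffBump (0 : EuclideanSpace ℝ (Fin n)) := ⟨R / 4, R / 2, hR4, hR2⟩
    refine ⟨⇑c, c.contDiff, ?_, ?_⟩
    · rw [c.tsupport_eq]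
      exact Metric.closedBall_subset_ball (show R / 2 < R by linarith)
    · intro h
      have h1 : c 0 = 1 := c.one_of_mem_closedBall (Metric.mem_closedBall_self hR4.le)
      rw [h] at h1
      simpa using h1
  -- nonemptiness of SR
  have hSRne : SR.Nonempty := by
    refine ⟨_, φ0, hφ0, hsupp0, hne0, rfl⟩
  -- nonemptiness of SL
  have hS0 : 0 < ∫ x in Metric.ball (0 : EuclideanSpace ℝ (Fin n)) R, φ0 x ^ 2 :=
    sq_pos_of_ne hφ0 hsupp0 hne0
  have hSLne : SL.Nonempty := by
    obtain ⟨ψ, hψ, hψs, hψ1, _⟩ := normalize_mem (D := D) (b := b) (d := d) hφ0 hsupp0 hS0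
    exact ⟨_, ψ, hψ, hψs, hψ1, rfl⟩
  -- SR bounded above
  have hSRbdd : BddAbove SR := by
    refine ⟨b2 / b1, fun q hq => ?_⟩
    obtain ⟨φ, hφ, hsupp, hne, rfl⟩ := hq
    obtain ⟨hQ, hE, hN⟩ := key_facts hD hb1 hbc hdc hb hd hφ hsupp
    have hS : 0 < ∫ x in Metric.ball (0 : EuclideanSpace ℝ (Fin n)) R, φ x ^ 2 :=
      sq_pos_of_ne hφ hsupp hne
    have hEpos : 0 < ∫ x in Metric.ball (0 : EuclideanSpace ℝ (Fin n)) R,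
        (D * ‖fderiv ℝ φ x‖ ^ 2 + d x * (φ x) ^ 2) := by nlinarith
    rw [div_le_div_iff₀ hEpos hb1]
    nlinarith
  -- SL bounded below
  have hSLbdd : BddBelow SL := by
    refine ⟨b1 - b2, fun q hq => ?_⟩
    obtain ⟨φ, hφ, hsupp, hS1, rfl⟩ := hq
    obtain ⟨hQ, hE, hN⟩ := key_facts hD hb1 hbc hdc hb hd hφ hsupp
    rw [hS1] at hE hN
    linarith [hQ]
  --膜 helper: elements of SL coming from normalized φ with S > 0
  have hmemSL : ∀ φ : EuclideanSpace ℝ (Fin n) → ℝ, ContDiff ℝ 1 φ →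
      tsupport φ ⊆ Metric.ball (0 : EuclideanSpace ℝ (Fin n)) R →
      (0 < ∫ x in Metric.ball (0 : EuclideanSpace ℝ (Fin n)) R, φ x ^ 2) →
      ((∫ x in Metric.ball (0 : EuclideanSpace ℝ (Fin n)) R,
          (D * ‖fderiv ℝ φ x‖ ^ 2 + (d x - b x) * φ x ^ 2)) /
        (∫ x in Metric.ball (0 : EuclideanSpace ℝ (Fin n)) R, φ x ^ 2)) ∈ SL := by
    intro φ hφ hsupp hS
    obtain ⟨ψ, hψ, hψs, hψ1, hψQ⟩ := normalize_mem (D := D) (b := b) (d := d) hφ hsupp hS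
    exact ⟨ψ, hψ, hψs, hψ1, hψQ.symm⟩
  -- (I) 0 < l → r < 1
  have h1 : 0 < l → r < 1 := by
    intro hlpos
    rw [hrdef]
    have hub : ∀ q ∈ SR, q ≤ b2 / (l + b2) := by
      intro q hq
      obtain ⟨φ, hφ, hsupp, hne, rfl⟩ := hq
      obtain ⟨hQ, hE, hN⟩ := key_facts hD hb1 hbc hdc hb hd hφ hsupp
      have hS : 0 < ∫ x in Metric.ball (0 : EuclideanSpace ℝ (Fin n)) R, φ x ^ 2 :=
        sq_pos_of_ne hφ hsupp hne
      have hEpos : 0 < ∫ x in Metric.ball (0 : EuclideanSpace ℝ (Fin n)) R,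
          (D * ‖fderiv ℝ φ x‖ ^ 2 + d x * (φ x) ^ 2) := by nlinarith
      have hmem := hmemSL φ hφ hsupp hS
      have hlle : l ≤ (∫ x in Metric.ball (0 : EuclideanSpace ℝ (Fin n)) R,
          (D * ‖fderiv ℝ φ x‖ ^ 2 + (d x - b x) * φ x ^ 2)) /
          (∫ x in Metric.ball (0 : EuclideanSpace ℝ (Fin n)) R, φ x ^ 2) := by
        rw [hldef]
        exact csInf_le hSLbdd hmem
      rw [le_div_iff₀ hS] at hlle
      rw [hQ] at hlle
      rw [div_le_div_iff₀ hEpos (by linarith)]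
      nlinarith
    have := csSup_le hSRne hub
    refine lt_of_le_of_lt this ?_
    rw [div_lt_one (by linarith)]
    linarith
  -- (II) r < 1 → 0 < l
  have h2 : r < 1 → 0 < l := by
    intro hrlt
    have hlb : ∀ q ∈ SL, (1 - r) * b1 ≤ q := by
      intro q hq
      obtain ⟨φ, hφ, hsupp, hS1, rfl⟩ := hq
      obtain ⟨hQ, hE, hN⟩ := key_facts hD hb1 hbc hdc hb hd hφ hsupp
      have hne : φ ≠ 0 := by
        intro h
        rw [h] at hS1
        simp at hS1
      have hmem : ((∫ x in Metric.ball (0 : EuclideanSpace ℝ (Fin n)) R, b x * (φ x) ^ 2) /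
          (∫ x in Metric.ball (0 : EuclideanSpace ℝ (Fin n)) R,
            (D * ‖fderiv ℝ φ x‖ ^ 2 + d x * (φ x) ^ 2))) ∈ SR :=
        ⟨φ, hφ, hsupp, hne, rfl⟩
      have hqler : ((∫ x in Metric.ball (0 : EuclideanSpace ℝ (Fin n)) R, b x * (φ x) ^ 2) /
          (∫ x in Metric.ball (0 : EuclideanSpace ℝ (Fin n)) R,
            (D * ‖fderiv ℝ φ x‖ ^ 2 + d x * (φ x) ^ 2))) ≤ r := by
        rw [hrdef]
        exact le_csSup hSRbdd hmem
      rw [hS1] at hE hN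
      have hEpos : 0 < ∫ x in Metric.ball (0 : EuclideanSpace ℝ (Fin n)) R,
          (D * ‖fderiv ℝ φ x‖ ^ 2 + d x * (φ x) ^ 2) := by nlinarith
      rw [div_le_iff₀ hEpos] at hqler
      rw [hQ]
      nlinarith
    have : (1 - r) * b1 ≤ l := by
      rw [hldef]
      exact le_csInf hSLne hlb
    nlinarith
  -- (III) l < 0 → 1 < r
  have h3 : l < 0 → 1 < r := by
    intro hlneg
    obtain ⟨q, hq, hq0⟩ := exists_lt_of_csInf_lt hSLne (by rw [← hldef]; exact hlneg)
    obtain ⟨φ, hφ, hsupp, hS1, rfl⟩ := hq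
    obtain ⟨hQ, hE, hN⟩ := key_facts hD hb1 hbc hdc hb hd hφ hsupp
    have hne : φ ≠ 0 := by
      intro h
      rw [h] at hS1
      simp at hS1
    rw [hS1] at hE hN
    have hEpos : 0 < ∫ x in Metric.ball (0 : EuclideanSpace ℝ (Fin n)) R,
        (D * ‖fderiv ℝ φ x‖ ^ 2 + d x * (φ x) ^ 2) := by nlinarith
    have hmem : ((∫ x in Metric.ball (0 : EuclideanSpace ℝ (Fin n)) R, b x * (φ x) ^ 2) /
        (∫ x in Metric.ball (0 : EuclideanSpace ℝ (Fin n)) R,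
          (D * ‖fderiv ℝ φ x‖ ^ 2 + d x * (φ x) ^ 2))) ∈ SR :=
      ⟨φ, hφ, hsupp, hne, rfl⟩
    have h1lt : 1 < (∫ x in Metric.ball (0 : EuclideanSpace ℝ (Fin n)) R, b x * (φ x) ^ 2) /
        (∫ x in Metric.ball (0 : EuclideanSpace ℝ (Fin n)) R,
          (D * ‖fderiv ℝ φ x‖ ^ 2 + d x * (φ x) ^ 2)) := by
      rw [lt_div_iff₀ hEpos]
      rw [hQ] at hq0
      linarith
    calc (1:ℝ) < _ := h1lt
      _ ≤ r := by rw [hrdef]; exact le_csSup hSRbdd hmem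
  -- (IV) 1 < r → l < 0
  have h4 : 1 < r → l < 0 := by
    intro hrgt
    obtain ⟨q, hq, hq1⟩ := exists_lt_of_lt_csSup hSRne (by rw [← hrdef]; exact hrgt)
    obtain ⟨φ, hφ, hsupp, hne, rfl⟩ := hq
    obtain ⟨hQ, hE, hN⟩ := key_facts hD hb1 hbc hdc hb hd hφ hsupp
    have hS : 0 < ∫ x in Metric.ball (0 : EuclideanSpace ℝ (Fin n)) R, φ x ^ 2 :=
      sq_pos_of_ne hφ hsupp hne
    have hEpos : 0 < ∫ x in Metric.ball (0 : EuclideanSpace ℝ (Fin n)) R,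
        (D * ‖fderiv ℝ φ x‖ ^ 2 + d x * (φ x) ^ 2) := by nlinarith
    rw [one_lt_div hEpos] at hq1
    have hQneg : (∫ x in Metric.ball (0 : EuclideanSpace ℝ (Fin n)) R,
        (D * ‖fderiv ℝ φ x‖ ^ 2 + (d x - b x) * φ x ^ 2)) < 0 := by
      rw [hQ]; linarith
    have hmem := hmemSL φ hφ hsupp hS
    have : l ≤ (∫ x in Metric.ball (0 : EuclideanSpace ℝ (Fin n)) R,
        (D * ‖fderiv ℝ φ x‖ ^ 2 + (d x - b x) * φ x ^ 2)) /
        (∫ x in Metric.ball (0 : EuclideanSpace ℝ (Fin n)) R, φ x ^ 2) := by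
      rw [hldef]
      exact csInf_le hSLbdd hmem
    have hdivneg : (∫ x in Metric.ball (0 : EuclideanSpace ℝ (Fin n)) R,
        (D * ‖fderiv ℝ φ x‖ ^ 2 + (d x - b x) * φ x ^ 2)) /
        (∫ x in Metric.ball (0 : EuclideanSpace ℝ (Fin n)) R, φ x ^ 2) < 0 :=
      div_neg_of_neg_of_pos hQneg hS
    linarith
  refine ⟨⟨h1, h2⟩, ⟨?_, ?_⟩, ⟨h3, h4⟩⟩
  · intro hl0
    by_contra hne
    rcases lt_or_gt_of_ne hne with h | h
    · have := h2 h; rw [hl0] at this; exact lt_irrefl _ this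
    · have := h4 h; rw [hl0] at this; exact lt_irrefl _ this
  · intro hr1
    by_contra hne
    rcases lt_or_gt_of_ne hne with h | h
    · have := h3 h; rw [hr1] at this; exact lt_irrefl _ this
    · have := h1 h; rw [hr1] at this; exact lt_irrefl _ this
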